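/- Let S be a numerical semigroup and suppose (a_0,…,a_g) and (a'_0,…,a'_g) are two arrangements of the same positive integers (one is a permutation of the other) such that S = ⟨a_0,…,a_g⟩ is free for both arrangements; let n_i (resp. n'_i) be the quotients e_{i-1}/e_i computed from the first (resp. second) arrangement. Then ∏_{i=1}^{g} (1 − t^{n_i·a_i}) = ∏_{i=1}^{g} (1 − t^{n'_i·a'_i}) as polynomials in ℤ[t]. -/

import Mathlib

/-- `eSeq a i = gcd(a 0, …, a i)`. -/
def eSeq (a : ℕ → ℕ) : ℕ → ℕ
  | 0 => a 0
  | i + 1 => Nat.gcd (eSeq a i) (a (i + 1))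

/-- `nSeq a i = e_{i-1} / e_i` (intended for `1 ≤ i`). -/
def nSeq (a : ℕ → ℕ) (i : ℕ) : ℕ := eSeq a (i - 1) / eSeq a i

/-- `gen a i = ⟨a 0, …, a i⟩`, the set of all ℕ-linear combinations. -/
def gen (a : ℕ → ℕ) (i : ℕ) : Set ℕ :=
  {s | ∃ c : ℕ → ℕ, s = ∑ j ∈ Finset.range (i + 1), c j * a j}

/-- The semigroup `S = ⟨a 0, …, a g⟩` is free for the arrangement `(a 0, …, a g)`. -/
def IsFreeArr (a : ℕ → ℕ) (g : ℕ) : Prop :=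
  eSeq a g = 1 ∧ ∀ i, 1 ≤ i → i ≤ g → nSeq a i * a i ∈ gen a (i - 1)

lemma gen_add {a : ℕ → ℕ} {k x y : ℕ} (hx : x ∈ gen a k) (hy : y ∈ gen a k) :
    x + y ∈ gen a k := by
  obtain ⟨c, rfl⟩ := hx
  obtain ⟨d, rfl⟩ := hy
  exact ⟨fun j => c j + d j, by rw [← Finset.sum_add_distrib]; simp [add_mul]⟩

lemma gen_smul {a : ℕ → ℕ} {k x : ℕ} (q : ℕ) (hx : x ∈ gen a k) : q * x ∈ gen a k := by
  obtain ⟨c, rfl⟩ := hx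
  exact ⟨fun j => q * c j, by rw [Finset.mul_sum]; simp [mul_assoc]⟩

lemma gen_mul_a_mem {a : ℕ → ℕ} {k j : ℕ} (hj : j ≤ k) (c : ℕ) : c * a j ∈ gen a k := by
  refine ⟨fun i => if i = j then c else 0, ?_⟩
  rw [Finset.sum_eq_single j]
  · simp
  · intro b _ hb; simp [hb]
  · intro h; exact absurd (Finset.mem_range.2 (by omega)) h

lemma gen_zero_mem {a : ℕ → ℕ} {k : ℕ} : 0 ∈ gen a k := ⟨fun _ => 0, by simp⟩

lemma gen_mono {a : ℕ → ℕ} {k : ℕ} : gen a k ⊆ gen a (k + 1) := by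
  rintro s ⟨c, rfl⟩
  refine ⟨Function.update c (k+1) 0, ?_⟩
  rw [Finset.sum_range_succ (fun j => Function.update c (k+1) 0 j * a j) (k+1),
    Function.update_self, zero_mul, add_zero]
  refine Finset.sum_congr rfl fun j hj => ?_
  rw [Function.update_of_ne (by simp at hj; omega)]

lemma eSeq_pos {a : ℕ → ℕ} (ha : 0 < a 0) (k : ℕ) : 0 < eSeq a k := by
  induction k with
  | zero => exact ha
  | succ k ih => exact Nat.gcd_pos_of_pos_left _ ih

lemma eSeq_succ_dvd {a : ℕ → ℕ} (k : ℕ) : eSeq a (k + 1) ∣ eSeq a k := Nat.gcd_dvd_left _ _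

lemma eSeq_dvd_a {a : ℕ → ℕ} {k j : ℕ} (hj : j ≤ k) : eSeq a k ∣ a j := by
  induction k with
  | zero => interval_cases j; exact dvd_refl _
  | succ k ih =>
    rcases Nat.lt_or_ge j (k+1) with h | h
    · exact (eSeq_succ_dvd k).trans (ih (by omega))
    · have : j = k + 1 := by omega
      subst this; exact Nat.gcd_dvd_right _ _

lemma eSeq_dvd_mem {a : ℕ → ℕ} {k s : ℕ} (hs : s ∈ gen a k) : eSeq a k ∣ s := by
  obtain ⟨c, rfl⟩ := hs
  exact Finset.dvd_sum fun j hj => Dvd.dvd.mul_left (eSeq_dvd_a (by simp at hj; omega)) _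


open Classical in
noncomputable def FS (S : Set ℕ) : PowerSeries ℤ :=
  PowerSeries.mk fun m => if m ∈ S then 1 else 0

open Classical in
lemma key (a : ℕ → ℕ) (k : ℕ) (ha0 : 0 < a 0) (hA : 0 < a (k+1))
    (hnA : nSeq a (k+1) * a (k+1) ∈ gen a k) (m : ℕ) :
    (if m ∈ gen a (k+1) then (1:ℤ) else 0)
      = ∑ c ∈ Finset.range (nSeq a (k+1)),
          if c * a (k+1) ≤ m then (if m - c * a (k+1) ∈ gen a k then (1:ℤ) else 0) else 0 := by
  set n := nSeq a (k+1) with hn_def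
  set A := a (k+1) with hA_def
  set e := eSeq a k with he_def
  set e' := eSeq a (k+1) with he'_def
  have he'pos : 0 < e' := eSeq_pos ha0 _
  have hepos : 0 < e := eSeq_pos ha0 _
  have hdvd : e' ∣ e := eSeq_succ_dvd k
  have hne : n * e' = e := Nat.div_mul_cancel hdvd
  have hnpos : 0 < n := Nat.div_pos (Nat.le_of_dvd hepos hdvd) he'pos
  have he'A : e' ∣ A := Nat.gcd_dvd_right _ _
  have hgcd : Nat.gcd e A = e' := rfl
  -- uniqueness
  have huniq : ∀ c c' : ℕ, c < n → c' < n →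
      c * A ≤ m → m - c * A ∈ gen a k → c' * A ≤ m → m - c' * A ∈ gen a k → c = c' := by
    have step : ∀ c c' : ℕ, c < c' → c' < n →
        c * A ≤ m → m - c * A ∈ gen a k → c' * A ≤ m → m - c' * A ∈ gen a k → False := by
      intro c c' hlt hc' hcm hcg hc'm hc'g
      obtain ⟨d, rfl⟩ : ∃ d, c' = c + d := ⟨c' - c, by omega⟩
      have hdpos : 0 < d := by omega
      have hdlt : d < n := by omega
      have hmul : c * A + d * A = (c + d) * A := by rw [← add_mul]
      have hsub : (m - c * A) - (m - (c + d) * A) = d * A := by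
        rw [← hmul] at hc'm ⊢
        omega
      have h1 : e ∣ (m - c * A) := eSeq_dvd_mem hcg
      have h2 : e ∣ (m - (c + d) * A) := eSeq_dvd_mem hc'g
      have h3 : e ∣ d * A := hsub ▸ Nat.dvd_sub h1 h2
      set A' := A / e' with hA'_def
      have hAe : A' * e' = A := Nat.div_mul_cancel he'A
      have h4 : n ∣ d * A' := by
        have h5 : (n * e') ∣ (d * A') * e' := by
          rw [hne, mul_assoc, hAe]; exact h3
        exact (mul_dvd_mul_iff_right (by omega : e' ≠ 0)).1 h5
      have hcop : Nat.Coprime n A' := by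
        have h := Nat.coprime_div_gcd_div_gcd (m := e) (n := A) (by rw [hgcd]; omega)
        rw [hgcd] at h
        exact h
      have h5 : n ∣ d := hcop.dvd_of_dvd_mul_right h4
      have := Nat.le_of_dvd hdpos h5
      omega
    intro c c' hc hc' h1 h2 h3 h4
    rcases Nat.lt_trichotomy c c' with h | h | h
    · exact absurd (step c c' h hc' h1 h2 h3 h4) (by simp)
    · exact h
    · exact absurd (step c' c h hc h3 h4 h1 h2) (by simp)
  -- converse
  have hconv : ∀ c : ℕ, c * A ≤ m → m - c * A ∈ gen a k → m ∈ gen a (k+1) := by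
    intro c hc hg
    have h6 : (m - c * A) + c * A ∈ gen a (k+1) :=
      gen_add (gen_mono hg) (gen_mul_a_mem le_rfl c)
    rwa [Nat.sub_add_cancel hc] at h6
  by_cases hm : m ∈ gen a (k+1)
  · -- existence
    obtain ⟨c, hc⟩ := hm
    rw [Finset.sum_range_succ] at hc
    have hs0 : (∑ j ∈ Finset.range (k+1), c j * a j) ∈ gen a k := ⟨c, rfl⟩
    set s0 := ∑ j ∈ Finset.range (k+1), c j * a j with hs0_def
    set q := c (k+1) / n with hq_def
    set r := c (k+1) % n with hr_def
    have hrn : r < n := Nat.mod_lt _ hnpos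
    have hqr : n * q + r = c (k+1) := Nat.div_add_mod _ _
    clear_value s0 q r
    have hmr : m = s0 + q * (n * A) + r * A := by
      rw [hc, ← hqr]
      ring
    have hrg : m - r * A ∈ gen a k := by
      have h7 : s0 + q * (n * A) ∈ gen a k := gen_add hs0 (gen_smul q hnA)
      have heq : m - r * A = s0 + q * (n * A) := by
        set u := q * (n * A)
        set v := r * A
        omega
      rwa [heq]
    have hrm : r * A ≤ m := by
      set u := q * (n * A)
      set v := r * A
      omega
    rw [if_pos (hconv r hrm hrg)]
    rw [Finset.sum_eq_single_of_mem r (Finset.mem_range.2 hrn)]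
    · rw [if_pos hrm, if_pos hrg]
    · intro b hb hbr
      rw [Finset.mem_range] at hb
      split_ifs with h1 h2
      · exact absurd (huniq b r hb hrn h1 h2 hrm hrg) hbr
      · rfl
      · rfl
  · rw [if_neg hm]
    refine (Finset.sum_eq_zero fun c hc => ?_).symm
    split_ifs with h1 h2
    · exact absurd (hconv c h1 h2) hm
    · rfl
    · rfl


open Classical in
lemma FS_step (a : ℕ → ℕ) (k : ℕ) (ha0 : 0 < a 0) (hA : 0 < a (k+1))
    (hnA : nSeq a (k+1) * a (k+1) ∈ gen a k) :
    FS (gen a (k+1)) = FS (gen a k) *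
      ∑ c ∈ Finset.range (nSeq a (k+1)), (PowerSeries.X : PowerSeries ℤ) ^ (c * a (k+1)) := by
  ext m
  rw [Finset.mul_sum, map_sum]
  have h1 : ∀ c : ℕ, (PowerSeries.coeff m) (FS (gen a k) * PowerSeries.X ^ (c * a (k+1)))
      = if c * a (k+1) ≤ m then (if m - c * a (k+1) ∈ gen a k then (1:ℤ) else 0) else 0 := by
    intro c
    rw [PowerSeries.coeff_mul_X_pow']
    by_cases h : c * a (k+1) ≤ m
    · rw [if_pos h, if_pos h, FS, PowerSeries.coeff_mk]
    · rw [if_neg h, if_neg h]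
  simp only [h1]
  rw [FS, PowerSeries.coeff_mk]
  exact key a k ha0 hA hnA m

open Classical in
lemma FS_base (a : ℕ → ℕ) (ha0 : 0 < a 0) :
    FS (gen a 0) * (1 - (PowerSeries.X : PowerSeries ℤ) ^ (a 0)) = 1 := by
  have hmem : ∀ m : ℕ, m ∈ gen a 0 ↔ a 0 ∣ m := by
    intro m
    constructor
    · rintro ⟨c, rfl⟩
      simp only [zero_add, Finset.range_one, Finset.sum_singleton]
      exact Dvd.intro _ (mul_comm _ _)
    · rintro ⟨c, rfl⟩
      exact ⟨fun _ => c, by simp [mul_comm]⟩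
  ext m
  simp only [mul_sub, mul_one, map_sub, PowerSeries.coeff_mul_X_pow', FS, PowerSeries.coeff_mk,
    PowerSeries.coeff_one]
  by_cases hm : m = 0
  · subst hm
    rw [if_pos ((hmem 0).2 (dvd_zero _)), if_neg (by omega), if_pos rfl, sub_zero]
  · rw [if_neg hm]
    by_cases hd : a 0 ∣ m
    · have h1 : a 0 ≤ m := Nat.le_of_dvd (by omega) hd
      rw [if_pos ((hmem m).2 hd), if_pos h1, if_pos ((hmem _).2 (Nat.dvd_sub hd dvd_rfl)),
        sub_self]
    · have h2 : (if a 0 ≤ m then (if m - a 0 ∈ gen a 0 then (1:ℤ) else 0) else 0) = 0 := by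
        split_ifs with h1 h2
        · exact absurd ((Nat.sub_add_cancel h1) ▸ dvd_add ((hmem _).1 h2) dvd_rfl) hd
        · rfl
        · rfl
      rw [if_neg (fun h => hd ((hmem m).1 h)), h2, sub_zero]

lemma hilbert (g : ℕ) (a : ℕ → ℕ) (hpos : ∀ i, i ≤ g → 0 < a i) (hfree : IsFreeArr a g) :
    ∀ k, k ≤ g → FS (gen a k) *
        ∏ i ∈ Finset.range (k+1), (1 - (PowerSeries.X : PowerSeries ℤ) ^ (a i))
      = ∏ i ∈ Finset.Icc 1 k, (1 - (PowerSeries.X : PowerSeries ℤ) ^ (nSeq a i * a i)) := by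
  intro k
  induction k with
  | zero =>
    intro _
    rw [zero_add, Finset.range_one, Finset.prod_singleton, FS_base a (hpos 0 (by omega))]
    rw [Finset.Icc_eq_empty_of_lt (by omega : (0:ℕ) < 1), Finset.prod_empty]
  | succ k ih =>
    intro hk
    have ha0 : 0 < a 0 := hpos 0 (by omega)
    have hA : 0 < a (k+1) := hpos (k+1) hk
    have hnA : nSeq a (k+1) * a (k+1) ∈ gen a k := by
      have := hfree.2 (k+1) (by omega) hk
      simpa using this
    have hgeom : (∑ c ∈ Finset.range (nSeq a (k+1)),
          (PowerSeries.X : PowerSeries ℤ) ^ (c * a (k+1)))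
        * (1 - (PowerSeries.X : PowerSeries ℤ) ^ (a (k+1)))
        = 1 - (PowerSeries.X : PowerSeries ℤ) ^ (nSeq a (k+1) * a (k+1)) := by
      have h := geom_sum_mul ((PowerSeries.X : PowerSeries ℤ) ^ (a (k+1))) (nSeq a (k+1))
      have hxp : ∀ c : ℕ, ((PowerSeries.X : PowerSeries ℤ) ^ (a (k+1))) ^ c
          = (PowerSeries.X : PowerSeries ℤ) ^ (c * a (k+1)) := by
        intro c; rw [← pow_mul, mul_comm]
      simp only [hxp] at h
      linear_combination -h
    rw [Finset.prod_range_succ, FS_step a k ha0 hA hnA]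
    have hring : FS (gen a k) * (∑ c ∈ Finset.range (nSeq a (k+1)),
          (PowerSeries.X : PowerSeries ℤ) ^ (c * a (k+1)))
        * ((∏ i ∈ Finset.range (k+1), (1 - (PowerSeries.X : PowerSeries ℤ) ^ (a i)))
            * (1 - (PowerSeries.X : PowerSeries ℤ) ^ (a (k+1))))
        = (FS (gen a k) * ∏ i ∈ Finset.range (k+1), (1 - (PowerSeries.X : PowerSeries ℤ) ^ (a i)))
          * ((∑ c ∈ Finset.range (nSeq a (k+1)),
              (PowerSeries.X : PowerSeries ℤ) ^ (c * a (k+1)))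
            * (1 - (PowerSeries.X : PowerSeries ℤ) ^ (a (k+1)))) := by ring
    rw [hring, hgeom, ih (by omega), Finset.prod_Icc_succ_top (by omega : 1 ≤ k + 1)]

lemma gen_perm_subset (g : ℕ) (a a' : ℕ → ℕ) (σ : Equiv.Perm (Fin (g+1)))
    (h : ∀ i : Fin (g+1), a' i.val = a (σ i).val) : gen a' g ⊆ gen a g := by
  rintro s ⟨c, rfl⟩
  refine ⟨fun j => if hj : j < g+1 then c ((σ.symm ⟨j, hj⟩) : ℕ) else 0, ?_⟩
  rw [← Fin.sum_univ_eq_sum_range (fun j => c j * a' j) (g+1),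
    ← Fin.sum_univ_eq_sum_range (fun j => (if hj : j < g+1 then c ((σ.symm ⟨j, hj⟩) : ℕ) else 0) * a j) (g+1)]
  have h2 : ∀ j : Fin (g+1),
      (if hj : (j : ℕ) < g+1 then c ((σ.symm ⟨j, hj⟩) : ℕ) else 0) * a j
        = c ((σ.symm j : Fin (g+1)) : ℕ) * a j := by
    intro j
    rw [dif_pos j.isLt]
  rw [Finset.sum_congr rfl fun j _ => h2 j]
  rw [← Equiv.sum_comp σ (fun j => c ((σ.symm j : Fin (g+1)) : ℕ) * a (j : ℕ))]
  simp only [Equiv.symm_apply_apply]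
  exact Finset.sum_congr rfl fun j _ => by rw [h j]

lemma prod_perm (g : ℕ) (a a' : ℕ → ℕ) (σ : Equiv.Perm (Fin (g+1)))
    (h : ∀ i : Fin (g+1), a' i.val = a (σ i).val) :
    ∏ i ∈ Finset.range (g+1), (1 - (PowerSeries.X : PowerSeries ℤ) ^ (a' i))
      = ∏ i ∈ Finset.range (g+1), (1 - (PowerSeries.X : PowerSeries ℤ) ^ (a i)) := by
  rw [← Fin.prod_univ_eq_prod_range (fun i => 1 - (PowerSeries.X : PowerSeries ℤ) ^ (a' i)) (g+1),
    ← Fin.prod_univ_eq_prod_range (fun i => 1 - (PowerSeries.X : PowerSeries ℤ) ^ (a i)) (g+1)]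
  exact Fintype.prod_equiv σ _ _ fun i => by rw [h i]

theorem stmt_5 (g : ℕ) (a a' : ℕ → ℕ) (hpos : ∀ i, i ≤ g → 0 < a i)
    (hperm : ∃ σ : Equiv.Perm (Fin (g + 1)), ∀ i : Fin (g + 1), a' i.val = a (σ i).val)
    (hfree : IsFreeArr a g) (hfree' : IsFreeArr a' g) :
    ∏ i ∈ Finset.Icc 1 g, (1 - (Polynomial.X : Polynomial ℤ) ^ (nSeq a i * a i)) =
      ∏ i ∈ Finset.Icc 1 g, (1 - (Polynomial.X : Polynomial ℤ) ^ (nSeq a' i * a' i)) := by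
  obtain ⟨σ, hσ⟩ := hperm
  have hpos' : ∀ i, i ≤ g → 0 < a' i := by
    intro i hi
    have : a' i = a ((σ ⟨i, by omega⟩ : Fin (g+1)) : ℕ) := hσ ⟨i, by omega⟩
    rw [this]
    exact hpos _ (by omega)
  have hσ' : ∀ i : Fin (g+1), a i.val = a' (σ.symm i).val := by
    intro i
    rw [hσ (σ.symm i), Equiv.apply_symm_apply]
  have hgen : gen a g = gen a' g :=
    Set.Subset.antisymm (gen_perm_subset g a' a σ.symm hσ') (gen_perm_subset g a a' σ hσ)
  have hprod := prod_perm g a a' σ hσ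
  have H := hilbert g a hpos hfree g le_rfl
  have H' := hilbert g a' hpos' hfree' g le_rfl
  rw [← Polynomial.coe_inj,
    ← Polynomial.coeToPowerSeries.ringHom_apply, ← Polynomial.coeToPowerSeries.ringHom_apply,
    map_prod, map_prod]
  simp only [map_sub, map_one, map_pow, Polynomial.coeToPowerSeries.ringHom_apply,
    Polynomial.coe_X]
  rw [← H, ← H', hgen, hprod]
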